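/- Let Ω be a probability space, X and Z finite types, n ≥ 1, let X₁, …, Xₙ : Ω → X be jointly independent and identically distributed random variables, and let Z : Ω → Z be any random variable. Then for every j ∈ {1, …, n}, the mutual information between the joint training tuple and Z satisfies I((X₁, …, Xₙ); Z) ≤ (n − 1)·H(X₁) + I(X_j; Z). -/

import Mathlib

open MeasureTheory ProbabilityTheory

/-- Shannon entropy `H(X) = −∑_a ℙ[X = a] log ℙ[X = a]` of a finite-valued random variable. -/
noncomputable def entropy {Ω 𝒳 : Type*} [MeasurableSpace Ω] [Fintype 𝒳]
    (μ : Measure Ω) (X : Ω → 𝒳) : ℝ :=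
  ∑ a : 𝒳, -((μ {ω | X ω = a}).toReal * Real.log ((μ {ω | X ω = a}).toReal))

/-- Conditional Shannon entropy `H(X | Z) = ∑_z ℙ[Z = z] H(X | Z = z)` of finite-valued
random variables. -/
noncomputable def condEntropy {Ω 𝒳 𝒵 : Type*} [MeasurableSpace Ω] [Fintype 𝒳] [Fintype 𝒵]
    (μ : Measure Ω) (X : Ω → 𝒳) (Z : Ω → 𝒵) : ℝ :=
  ∑ z : 𝒵, ∑ x : 𝒳,
    (μ {ω | X ω = x ∧ Z ω = z}).toReal *
      Real.log ((μ {ω | Z ω = z}).toReal / (μ {ω | X ω = x ∧ Z ω = z}).toReal)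

/-- Mutual information `I(X; Z) = H(X) − H(X | Z)` of finite-valued random variables. -/
noncomputable def mutualInfo {Ω 𝒳 𝒵 : Type*} [MeasurableSpace Ω] [Fintype 𝒳] [Fintype 𝒵]
    (μ : Measure Ω) (X : Ω → 𝒳) (Z : Ω → 𝒵) : ℝ :=
  entropy μ X - condEntropy μ X Z

lemma fiber_sum {Ω 𝒳 : Type*} [MeasurableSpace Ω] [Fintype 𝒳]
    [MeasurableSpace 𝒳] [MeasurableSingletonClass 𝒳]
    (μ : Measure Ω) [IsFiniteMeasure μ] (X : Ω → 𝒳) (hX : Measurable X)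
    (s : Set Ω) (hs : MeasurableSet s) :
    ∑ a : 𝒳, (μ ({ω | X ω = a} ∩ s)).toReal = (μ s).toReal := by
  have h1 : s = ⋃ a ∈ (Finset.univ : Finset 𝒳), ({ω | X ω = a} ∩ s) := by
    ext ω; simp
  rw [← ENNReal.toReal_sum (by intro a _; exact (measure_lt_top μ _).ne)]
  congr 1
  rw [← measure_biUnion_finset ?_ ?_, ← h1]
  · intro a _ b _ hab
    exact Set.disjoint_left.2 (by rintro ω ⟨rfl, _⟩ ⟨h, _⟩; exact hab h)
  · intro a _
    exact (hX (measurableSet_singleton a)).inter hs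

lemma entropy_tuple_le {Ω 𝒳 : Type*} [MeasurableSpace Ω] [Fintype 𝒳]
    [MeasurableSpace 𝒳] [MeasurableSingletonClass 𝒳]
    (μ : Measure Ω) [IsProbabilityMeasure μ]
    (n : ℕ) (X : Fin n → Ω → 𝒳) (hmeas : ∀ i, Measurable (X i)) :
    entropy μ (fun ω => fun i => X i ω) ≤ ∑ i, entropy μ (X i) := by
  classical
  set T : Ω → (Fin n → 𝒳) := fun ω => fun i => X i ω with hT
  have hTm : Measurable T := measurable_pi_lambda _ hmeas
  set p : (Fin n → 𝒳) → ℝ := fun v => (μ {ω | T ω = v}).toReal with hp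
  set pp : Fin n → 𝒳 → ℝ := fun i a => (μ {ω | X i ω = a}).toReal with hpp
  set q : (Fin n → 𝒳) → ℝ := fun v => ∏ i, pp i (v i) with hq
  have hp0 : ∀ v, 0 ≤ p v := fun v => ENNReal.toReal_nonneg
  have hpp0 : ∀ i a, 0 ≤ pp i a := fun i a => ENNReal.toReal_nonneg
  have hple : ∀ v i, p v ≤ pp i (v i) := by
    intro v i
    apply ENNReal.toReal_mono (measure_lt_top μ _).ne
    apply measure_mono
    intro ω hω
    simp only [Set.mem_setOf_eq] at hω ⊢; rw [← hω]
  have hpsum : ∑ v, p v = 1 := by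
    have := fiber_sum μ T hTm Set.univ MeasurableSet.univ
    simpa [Set.inter_univ] using this
  have hppsum : ∀ i, ∑ a, pp i a = 1 := by
    intro i
    have := fiber_sum μ (X i) (hmeas i) Set.univ MeasurableSet.univ
    simpa [Set.inter_univ] using this
  have hq0 : ∀ v, 0 ≤ q v := fun v => Finset.prod_nonneg fun i _ => hpp0 i (v i)
  have hqsum : ∑ v, q v = 1 := by
    rw [hq]
    rw [← Fintype.piFinset_univ, ← Finset.prod_univ_sum]
    simp [hppsum]
  -- entropy of component i as a sum over tuples
  have hcomp : ∀ i, entropy μ (X i) = ∑ v, -(p v * Real.log (pp i (v i))) := by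
    intro i
    have hm : ∀ v a, (μ ({ω | T ω = v} ∩ {ω | X i ω = a})).toReal
        = if v i = a then p v else 0 := by
      intro v a
      by_cases h : v i = a
      · rw [if_pos h, hp]
        congr 2
        ext ω; simp only [Set.mem_inter_iff, Set.mem_setOf_eq]
        exact ⟨fun hx => hx.1, fun hx => ⟨hx, by rw [show X i ω = T ω i from rfl, hx, h]⟩⟩
      · rw [if_neg h]
        have : ({ω | T ω = v} ∩ {ω | X i ω = a}) = ∅ := by
          ext ω; simp only [Set.mem_inter_iff, Set.mem_setOf_eq, Set.mem_empty_iff_false,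
            iff_false, not_and]
          intro hx hxa
          exact h (by rw [← hx]; exact hxa)
        rw [this, measure_empty, ENNReal.toReal_zero]
    have hfib : ∀ a, pp i a = ∑ v, (μ ({ω | T ω = v} ∩ {ω | X i ω = a})).toReal :=
      fun a => (fiber_sum μ T hTm {ω | X i ω = a}
        ((hmeas i) (measurableSet_singleton a))).symm
    show ∑ a, -(pp i a * Real.log (pp i a)) = _
    calc ∑ a, -(pp i a * Real.log (pp i a))
        = ∑ a, ∑ v, -((if v i = a then p v else 0) * Real.log (pp i a)) := by
          refine Finset.sum_congr rfl fun a _ => ?_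
          have h1 : (∑ v, if v i = a then p v else 0) = pp i a := by
            rw [hfib a]
            exact Finset.sum_congr rfl fun v _ => (hm v a).symm
          rw [Finset.sum_neg_distrib, ← Finset.sum_mul, h1]
      _ = ∑ v, ∑ a, -((if v i = a then p v else 0) * Real.log (pp i a)) :=
          Finset.sum_comm
      _ = ∑ v, -(p v * Real.log (pp i (v i))) := by
          refine Finset.sum_congr rfl fun v _ => ?_
          rw [show (∑ a, -((if v i = a then p v else 0) * Real.log (pp i a)))
              = ∑ a, if v i = a then -(p v * Real.log (pp i a)) else 0 from
            Finset.sum_congr rfl fun a _ => by split <;> simp]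
          rw [Finset.sum_ite_eq Finset.univ (v i) fun a => -(p v * Real.log (pp i a))]
          simp
  -- key pointwise inequality
  have hkey : ∀ v, -(p v * Real.log (p v)) ≤ -(p v * Real.log (q v)) + (q v - p v) := by
    intro v
    rcases eq_or_lt_of_le (hp0 v) with h0 | h0
    · simp [← h0, hq0 v]
    · have hqv : 0 < q v := Finset.prod_pos fun i _ => lt_of_lt_of_le h0 (hple v i)
      have hlog : Real.log (q v / p v) ≤ q v / p v - 1 :=
        Real.log_le_sub_one_of_pos (div_pos hqv h0)
      rw [Real.log_div hqv.ne' h0.ne'] at hlog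
      have := mul_le_mul_of_nonneg_left hlog (hp0 v)
      rw [mul_sub, mul_sub, mul_div_cancel₀ _ h0.ne', mul_one] at this
      linarith
  -- log of product
  have hlogq : ∀ v, p v * Real.log (q v) = p v * ∑ i, Real.log (pp i (v i)) := by
    intro v
    rcases eq_or_lt_of_le (hp0 v) with h0 | h0
    · rw [← h0]; ring
    · congr 1
      rw [hq]
      exact Real.log_prod fun i _ => (lt_of_lt_of_le h0 (hple v i)).ne'
  calc entropy μ T = ∑ v, -(p v * Real.log (p v)) := rfl
    _ ≤ ∑ v, (-(p v * Real.log (q v)) + (q v - p v)) := Finset.sum_le_sum fun v _ => hkey v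
    _ = ∑ v, -(p v * Real.log (q v)) := by
        rw [Finset.sum_add_distrib, Finset.sum_sub_distrib, hpsum, hqsum]; ring
    _ = ∑ v, ∑ i, -(p v * Real.log (pp i (v i))) := by
        refine Finset.sum_congr rfl fun v _ => ?_
        rw [Finset.sum_neg_distrib, ← Finset.mul_sum, ← hlogq v]
    _ = ∑ i, ∑ v, -(p v * Real.log (pp i (v i))) := Finset.sum_comm
    _ = ∑ i, entropy μ (X i) := by
        exact Finset.sum_congr rfl fun i _ => (hcomp i).symm

lemma condEntropy_comp_le {Ω 𝒴 𝒳 𝒵 : Type*} [MeasurableSpace Ω]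
    [Fintype 𝒴] [Fintype 𝒳] [Fintype 𝒵]
    [MeasurableSpace 𝒴] [MeasurableSingletonClass 𝒴]
    [MeasurableSpace 𝒵] [MeasurableSingletonClass 𝒵]
    (μ : Measure Ω) [IsProbabilityMeasure μ]
    (Y : Ω → 𝒴) (Z : Ω → 𝒵) (g : 𝒴 → 𝒳)
    (hY : Measurable Y) (hZ : Measurable Z) :
    condEntropy μ (fun ω => g (Y ω)) Z ≤ condEntropy μ Y Z := by
  classical
  refine Finset.sum_le_sum fun z _ => ?_
  set pz : ℝ := (μ {ω | Z ω = z}).toReal with hpz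
  set P : 𝒴 → ℝ := fun v => (μ {ω | Y ω = v ∧ Z ω = z}).toReal with hP
  set Q : 𝒳 → ℝ := fun a => (μ {ω | g (Y ω) = a ∧ Z ω = z}).toReal with hQdef
  have hP0 : ∀ v, 0 ≤ P v := fun v => ENNReal.toReal_nonneg
  have hsetm : MeasurableSet {ω | Z ω = z} := hZ (measurableSet_singleton z)
  have hQ : ∀ a, Q a = ∑ v, if g v = a then P v else 0 := by
    intro a
    have hs : MeasurableSet {ω | g (Y ω) = a ∧ Z ω = z} := by
      have : {ω | g (Y ω) = a ∧ Z ω = z}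
          = (Y ⁻¹' (g ⁻¹' {a})) ∩ {ω | Z ω = z} := by
        ext ω; simp [Set.mem_preimage]
      rw [this]
      exact (hY (MeasurableSet.of_discrete (s := g ⁻¹' {a}))).inter hsetm
    have := (fiber_sum μ Y hY _ hs).symm
    show (μ {ω | g (Y ω) = a ∧ Z ω = z}).toReal = _
    rw [this]
    refine Finset.sum_congr rfl fun v _ => ?_
    by_cases h : g v = a
    · rw [if_pos h, hP]
      congr 2
      ext ω
      simp only [Set.mem_inter_iff, Set.mem_setOf_eq]
      constructor
      · rintro ⟨hv, _, hz⟩; exact ⟨hv, hz⟩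
      · rintro ⟨hv, hz⟩; exact ⟨hv, by rw [hv, h], hz⟩
    · rw [if_neg h]
      have : {ω | Y ω = v} ∩ {ω | g (Y ω) = a ∧ Z ω = z} = ∅ := by
        ext ω
        simp only [Set.mem_inter_iff, Set.mem_setOf_eq, Set.mem_empty_iff_false,
          iff_false]
        rintro ⟨hv, ha, -⟩
        exact h (by rw [← hv]; exact ha)
      rw [this, measure_empty, ENNReal.toReal_zero]
  have hPleQ : ∀ v, P v ≤ Q (g v) := by
    intro v
    rw [hQ (g v)]
    have := Finset.single_le_sum (f := fun w => if g w = g v then P w else 0)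
      (fun w _ => by split <;> [exact hP0 w; exact le_refl 0]) (Finset.mem_univ v)
    simpa using this
  have hPlepz : ∀ v, P v ≤ pz := by
    intro v
    apply ENNReal.toReal_mono (measure_lt_top μ _).ne
    exact measure_mono fun ω hω => hω.2
  calc (∑ a, Q a * Real.log (pz / Q a))
      = ∑ a, ∑ v, (if g v = a then P v * Real.log (pz / Q a) else 0) := by
        refine Finset.sum_congr rfl fun a _ => ?_
        rw [hQ a, Finset.sum_mul]
        exact Finset.sum_congr rfl fun v _ => by split <;> simp
    _ = ∑ v, ∑ a, (if g v = a then P v * Real.log (pz / Q a) else 0) := Finset.sum_comm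
    _ = ∑ v, P v * Real.log (pz / Q (g v)) := by
        refine Finset.sum_congr rfl fun v _ => ?_
        rw [Finset.sum_ite_eq Finset.univ (g v) fun a => P v * Real.log (pz / Q a)]
        simp
    _ ≤ ∑ v, P v * Real.log (pz / P v) := by
        refine Finset.sum_le_sum fun v _ => ?_
        rcases eq_or_lt_of_le (hP0 v) with h0 | h0
        · rw [← h0]; simp
        · refine mul_le_mul_of_nonneg_left ?_ (hP0 v)
          have hQpos : 0 < Q (g v) := lt_of_lt_of_le h0 (hPleQ v)
          have hpzpos : 0 < pz := lt_of_lt_of_le h0 (hPlepz v)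
          apply Real.log_le_log (div_pos hpzpos hQpos)
          exact div_le_div_of_nonneg_left (le_of_lt hpzpos) h0 (hPleQ v)

/-- For i.i.d. `X₁, …, Xₙ` and any `Z`, the mutual information between the
joint tuple and `Z` satisfies `I((X₁, …, Xₙ); Z) ≤ (n − 1) · H(X₁) + I(X_j; Z)` for every `j`. -/
theorem mutualInfo_tuple_le
    {Ω 𝒳 𝒵 : Type*} [MeasurableSpace Ω] [Fintype 𝒳] [Fintype 𝒵]
    [MeasurableSpace 𝒳] [MeasurableSingletonClass 𝒳]
    [MeasurableSpace 𝒵] [MeasurableSingletonClass 𝒵]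
    (μ : Measure Ω) [IsProbabilityMeasure μ]
    (n : ℕ) (hn : 0 < n) (X : Fin n → Ω → 𝒳) (Z : Ω → 𝒵)
    (hmeas : ∀ i, Measurable (X i)) (hZ : Measurable Z)
    (hindep : iIndepFun X μ)
    (hident : ∀ i, IdentDistrib (X i) (X ⟨0, hn⟩) μ μ) :
    ∀ j : Fin n,
      mutualInfo μ (fun ω => fun i => X i ω) Z ≤
        ((n : ℝ) - 1) * entropy μ (X ⟨0, hn⟩) + mutualInfo μ (X j) Z := by
  intro j
  have hent : ∀ i, entropy μ (X i) = entropy μ (X ⟨0, hn⟩) := by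
    intro i
    unfold entropy
    refine Finset.sum_congr rfl fun a _ => ?_
    have hmap := (hident i).map_eq
    have h1 : μ {ω | X i ω = a} = μ {ω | X ⟨0, hn⟩ ω = a} := by
      have e1 : μ {ω | X i ω = a} = (μ.map (X i)) {a} := by
        rw [Measure.map_apply (hmeas i) (measurableSet_singleton a)]; rfl
      have e2 : μ {ω | X ⟨0, hn⟩ ω = a} = (μ.map (X ⟨0, hn⟩)) {a} := by
        rw [Measure.map_apply (hmeas _) (measurableSet_singleton a)]; rfl
      rw [e1, e2, hmap]
    rw [h1]
  have h1 : entropy μ (fun ω => fun i => X i ω) ≤ ∑ i, entropy μ (X i) :=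
    entropy_tuple_le μ n X hmeas
  have h2 : ∑ i, entropy μ (X i) = (n : ℝ) * entropy μ (X ⟨0, hn⟩) := by
    rw [Finset.sum_congr rfl fun i _ => hent i, Finset.sum_const, Finset.card_univ,
      Fintype.card_fin, nsmul_eq_mul]
  have h3 : condEntropy μ (X j) Z ≤ condEntropy μ (fun ω => fun i => X i ω) Z :=
    condEntropy_comp_le μ (fun ω => fun i => X i ω) Z (fun v => v j)
      (measurable_pi_lambda _ hmeas) hZ
  have h4 := hent j
  unfold mutualInfo
  linarith
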